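/- Let $n > 2$, $l_1 = 4$, and define recursively $l_{i+1} = \frac{l_i(n+1)}{n+2-l_i}$ for those $i$ with $l_i < n+2$. Then as long as the terms are defined, the sequence $(l_i)$ is strictly increasing and satisfies $l_{i+1} \geq l_1 \left(\frac{n+1}{n-2}\right)^i$ for all $i \geq 1$; in particular, there exists a smallest integer $k \geq 2$ with $l_k \geq n+2$. -/
import Mathlib


/-- Iteration of exponents: with `n > 2`, `l₁ = 4` and `l_{i+1} = l_i(n+1)/(n+2-l_i)`
(applied while `l_i < n+2`), the sequence is strictly increasing, satisfies
`l_{i+1} ≥ l₁ ((n+1)/(n-2))^i` as long as the terms are defined, and there is a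
smallest integer `k ≥ 2` with `l_k ≥ n+2`. -/
theorem stmt2 (n : ℕ) (hn : 2 < n) (l : ℕ → ℝ) (h1 : l 1 = 4)
    (hrec : ∀ i, 1 ≤ i → l i < (n : ℝ) + 2 →
      l (i + 1) = l i * ((n : ℝ) + 1) / ((n : ℝ) + 2 - l i)) :
    (∀ i, 1 ≤ i → (∀ j, 1 ≤ j → j ≤ i → l j < (n : ℝ) + 2) →
        l i < l (i + 1) ∧ 4 * (((n : ℝ) + 1) / ((n : ℝ) - 2)) ^ i ≤ l (i + 1)) ∧
    (∃ k, 2 ≤ k ∧ (n : ℝ) + 2 ≤ l k ∧ ∀ m, 2 ≤ m → m < k → l m < (n : ℝ) + 2) := by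
  classical
  have hn3 : (3:ℝ) ≤ (n:ℝ) := by exact_mod_cast hn
  set r : ℝ := ((n : ℝ) + 1) / ((n : ℝ) - 2) with hr_def
  have hd : (0:ℝ) < (n:ℝ) - 2 := by linarith
  have hr : 1 < r := by rw [hr_def, lt_div_iff₀ hd]; linarith
  have hr0 : (0:ℝ) < r := by linarith
  -- key growth lemma
  have key : ∀ i : ℕ, (∀ j, 1 ≤ j → j ≤ i → l j < (n : ℝ) + 2) →
      4 * r ^ i ≤ l (i + 1) := by
    intro i
    induction i with
    | zero => intro _; simp [h1]
    | succ m ih =>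
      intro h
      have hih : 4 * r ^ m ≤ l (m + 1) :=
        ih (fun j hj1 hj2 => h j hj1 (le_trans hj2 (Nat.le_succ m)))
      have hpm : (1:ℝ) ≤ r ^ m := one_le_pow₀ hr.le
      have h4 : (4:ℝ) ≤ l (m + 1) := by nlinarith
      have hlt : l (m + 1) < (n:ℝ) + 2 := h (m+1) (by omega) (by omega)
      have hdpos : 0 < (n:ℝ) + 2 - l (m+1) := by linarith
      have hdle : (n:ℝ) + 2 - l (m+1) ≤ (n:ℝ) - 2 := by linarith
      rw [hrec (m+1) (by omega) hlt]
      have step1 : 4 * r ^ (m+1) ≤ l (m+1) * ((n:ℝ)+1) / ((n:ℝ) - 2) := by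
        rw [mul_div_assoc, ← hr_def, pow_succ, ← mul_assoc]
        exact mul_le_mul_of_nonneg_right hih hr0.le
      calc 4 * r ^ (m+1) ≤ l (m+1) * ((n:ℝ)+1) / ((n:ℝ) - 2) := step1
        _ ≤ l (m+1) * ((n:ℝ)+1) / ((n:ℝ)+2 - l (m+1)) := by
            gcongr
  constructor
  · intro i hi h
    obtain ⟨m, rfl⟩ : ∃ m, i = m + 1 := ⟨i - 1, by omega⟩
    have hli : 4 * r ^ m ≤ l (m + 1) :=
      key m (fun j hj1 hj2 => h j hj1 (le_trans hj2 (Nat.le_succ m)))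
    have hpm : (1:ℝ) ≤ r ^ m := one_le_pow₀ hr.le
    have h4 : (4:ℝ) ≤ l (m + 1) := by nlinarith
    have hlt : l (m + 1) < (n:ℝ) + 2 := h (m+1) (by omega) le_rfl
    have hdpos : 0 < (n:ℝ) + 2 - l (m+1) := by linarith
    refine ⟨?_, key (m+1) h⟩
    rw [hrec (m+1) (by omega) hlt, lt_div_iff₀ hdpos]
    nlinarith
  · have hne : ∃ k, 2 ≤ k ∧ (n:ℝ) + 2 ≤ l k := by
      by_contra hc
      push_neg at hc
      have hall : ∀ j, 1 ≤ j → l j < (n:ℝ) + 2 := by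
        intro j hj
        rcases eq_or_lt_of_le hj with hj1 | hj2
        · rw [← hj1, h1]; linarith
        · exact hc j hj2
      obtain ⟨i, hi⟩ := pow_unbounded_of_one_lt (((n:ℝ)+2)/4) hr
      have hk := key i (fun j hj _ => hall j hj)
      rw [div_lt_iff₀ (by norm_num : (0:ℝ) < 4)] at hi
      have := hall (i+1) (by omega)
      linarith
    refine ⟨Nat.find hne, (Nat.find_spec hne).1, (Nat.find_spec hne).2, ?_⟩
    intro m hm hmk
    by_contra hc
    push_neg at hc
    exact Nat.find_min hne hmk ⟨hm, hc⟩
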